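/- arXiv:1012.2752 — 2 statements merged into one kernel-verified Lean document; each statement's English description precedes it below -/
import Mathlib

section
/- Let q : ℝ → ℝ be twice continuously differentiable and p : ℝ → ℝ continuously differentiable. For x, s ∈ ℝ define the 2×2 complex matrices L(x,s) with rows (−4ix^2 − i(s + 2q(s)^2), 4x q(s) + 2i p(s)) and (4x q(s) − 2i p(s), 4ix^2 + i(s + 2q(s)^2)), and M(x,s) with rows (−ix, q(s)) and (q(s), ix). Then the zero-curvature equation ∂_s L(x,s) − ∂_x M(x,s) + L(x,s)·M(x,s) − M(x,s)·L(x,s) = 0 holds for all x, s ∈ ℝ if and only if p(s) = q'(s) and q''(s) = 2 q(s)^3 + s q(s) for all s ∈ ℝ. -/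
open Matrix Complex Topology

/-- The Lax matrix `L(x,s)` of the Painlevé II system. -/
noncomputable def LaxL (q p : ℝ → ℝ) (x s : ℝ) : Matrix (Fin 2) (Fin 2) ℂ :=
  !![-4 * I * (x : ℂ) ^ 2 - I * ((s : ℂ) + 2 * (q s : ℂ) ^ 2),
      4 * (x : ℂ) * (q s : ℂ) + 2 * I * (p s : ℂ);
     4 * (x : ℂ) * (q s : ℂ) - 2 * I * (p s : ℂ),
      4 * I * (x : ℂ) ^ 2 + I * ((s : ℂ) + 2 * (q s : ℂ) ^ 2)]

/-- The Lax matrix `M(x,s)` of the Painlevé II system. -/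
noncomputable def LaxM (q : ℝ → ℝ) (x s : ℝ) : Matrix (Fin 2) (Fin 2) ℂ :=
  !![-I * (x : ℂ), (q s : ℂ); (q s : ℂ), I * (x : ℂ)]

set_option maxHeartbeats 1000000 in
lemma laxKey (q p : ℝ → ℝ) (hq : ContDiff ℝ 2 q) (hp : ContDiff ℝ 1 p) (x s : ℝ) :
    (Matrix.of fun i j =>
        deriv (fun s' => LaxL q p x s' i j) s - deriv (fun x' => LaxM q x' s i j) x) +
      (LaxL q p x s * LaxM q x s - LaxM q x s * LaxL q p x s) =
    !![4*I*(q s:ℂ)*((p s:ℂ) - ((deriv q s : ℝ) : ℂ)),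
       4*(x:ℂ)*(((deriv q s : ℝ) : ℂ) - (p s:ℂ)) + 2*I*(((deriv p s : ℝ) : ℂ) - (s:ℂ)*(q s:ℂ) - 2*(q s:ℂ)^3);
       4*(x:ℂ)*(((deriv q s : ℝ) : ℂ) - (p s:ℂ)) - 2*I*(((deriv p s : ℝ) : ℂ) - (s:ℂ)*(q s:ℂ) - 2*(q s:ℂ)^3),
       -(4*I*(q s:ℂ)*((p s:ℂ) - ((deriv q s : ℝ) : ℂ)))] := by
  have hqd : Differentiable ℝ q := hq.differentiable two_ne_zero
  have hpd : Differentiable ℝ p := hp.differentiable one_ne_zero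
  have hQ : HasDerivAt (fun t : ℝ => ((q t : ℝ) : ℂ)) ((deriv q s : ℝ) : ℂ) s :=
    ((hqd s).hasDerivAt).ofReal_comp
  have hP : HasDerivAt (fun t : ℝ => ((p t : ℝ) : ℂ)) ((deriv p s : ℝ) : ℂ) s :=
    ((hpd s).hasDerivAt).ofReal_comp
  have hS : HasDerivAt (fun t : ℝ => (t : ℂ)) 1 s := (hasDerivAt_id s).ofReal_comp
  have hX : HasDerivAt (fun t : ℝ => (t : ℂ)) 1 x := (hasDerivAt_id x).ofReal_comp
  have hQ2 : HasDerivAt (fun t : ℝ => ((q t : ℝ) : ℂ)^2)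
      (2*((q s : ℝ) : ℂ)*((deriv q s : ℝ) : ℂ)) s := by
    have := hQ.fun_mul hQ; rw [show (2*((q s : ℝ) : ℂ)*((deriv q s : ℝ) : ℂ)) = ((deriv q s:ℝ):ℂ) * ↑(q s) + ↑(q s) * ↑(deriv q s) by ring]; simpa [pow_two] using this
  have h00 := ((hS.add (hQ2.const_mul 2)).const_mul I).const_sub (-4*I*(x:ℂ)^2)
  have h01 := (hQ.const_mul (4*(x:ℂ))).fun_add (hP.const_mul (2*I))
  have h10 := (hQ.const_mul (4*(x:ℂ))).fun_sub (hP.const_mul (2*I))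
  have h11 := ((hS.add (hQ2.const_mul 2)).const_mul I).const_add (4*I*(x:ℂ)^2)
  have m00 := hX.const_mul (-I)
  have m11 := hX.const_mul I
  have e00 : deriv (fun s' => LaxL q p x s' 0 0) s
      = -(I * (1 + 2 * (2 * ((q s:ℝ):ℂ) * ((deriv q s : ℝ) : ℂ)))) := by
    have hfun : (fun s' => LaxL q p x s' 0 0)
        = fun s' : ℝ => -4*I*(x:ℂ)^2 - I*((s':ℂ) + 2*((q s':ℝ):ℂ)^2) := by
      funext t; simp [LaxL]
    rw [hfun]
    have := h00.deriv
    simpa using this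
  have e01 : deriv (fun s' => LaxL q p x s' 0 1) s
      = 4*(x:ℂ)*((deriv q s : ℝ) : ℂ) + 2*I*((deriv p s : ℝ) : ℂ) := by
    have hfun : (fun s' => LaxL q p x s' 0 1)
        = fun s' : ℝ => 4*(x:ℂ)*((q s':ℝ):ℂ) + 2*I*((p s':ℝ):ℂ) := by
      funext t; simp [LaxL]
    rw [hfun]
    simpa using h01.deriv
  have e10 : deriv (fun s' => LaxL q p x s' 1 0) s
      = 4*(x:ℂ)*((deriv q s : ℝ) : ℂ) - 2*I*((deriv p s : ℝ) : ℂ) := by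
    have hfun : (fun s' => LaxL q p x s' 1 0)
        = fun s' : ℝ => 4*(x:ℂ)*((q s':ℝ):ℂ) - 2*I*((p s':ℝ):ℂ) := by
      funext t; simp [LaxL]
    rw [hfun]
    simpa using h10.deriv
  have e11 : deriv (fun s' => LaxL q p x s' 1 1) s
      = I * (1 + 2 * (2 * ((q s:ℝ):ℂ) * ((deriv q s : ℝ) : ℂ))) := by
    have hfun : (fun s' => LaxL q p x s' 1 1)
        = fun s' : ℝ => 4*I*(x:ℂ)^2 + I*((s':ℂ) + 2*((q s':ℝ):ℂ)^2) := by
      funext t; simp [LaxL]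
    rw [hfun]
    simpa using h11.deriv
  have f00 : deriv (fun x' => LaxM q x' s 0 0) x = -I := by
    have hfun : (fun x' => LaxM q x' s 0 0) = fun x' : ℝ => -I * (x':ℂ) := by
      funext t; simp [LaxM]
    rw [hfun]
    simpa using m00.deriv
  have f01 : deriv (fun x' => LaxM q x' s 0 1) x = 0 := by
    have hfun : (fun x' => LaxM q x' s 0 1) = fun _ : ℝ => ((q s:ℝ):ℂ) := by
      funext t; simp [LaxM]
    rw [hfun, deriv_const]
  have f10 : deriv (fun x' => LaxM q x' s 1 0) x = 0 := by
    have hfun : (fun x' => LaxM q x' s 1 0) = fun _ : ℝ => ((q s:ℝ):ℂ) := by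
      funext t; simp [LaxM]
    rw [hfun, deriv_const]
  have f11 : deriv (fun x' => LaxM q x' s 1 1) x = I := by
    have hfun : (fun x' => LaxM q x' s 1 1) = fun x' : ℝ => I * (x':ℂ) := by
      funext t; simp [LaxM]
    rw [hfun]
    simpa using m11.deriv
  have dL : (Matrix.of fun i j => deriv (fun s' => LaxL q p x s' i j) s) =
      !![-(I * (1 + 2 * (2 * ((q s:ℝ):ℂ) * ((deriv q s : ℝ) : ℂ)))),
         4*(x:ℂ)*((deriv q s : ℝ) : ℂ) + 2*I*((deriv p s : ℝ) : ℂ);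
         4*(x:ℂ)*((deriv q s : ℝ) : ℂ) - 2*I*((deriv p s : ℝ) : ℂ),
         I * (1 + 2 * (2 * ((q s:ℝ):ℂ) * ((deriv q s : ℝ) : ℂ)))] := by
    ext i j
    fin_cases i <;> fin_cases j <;>
      simp only [Matrix.of_apply, Fin.zero_eta, Fin.mk_one, Fin.isValue, e00, e01, e10, e11] <;>
      simp
  have dM : (Matrix.of fun i j => deriv (fun x' => LaxM q x' s i j) x) =
      !![-I, 0; 0, I] := by
    ext i j
    fin_cases i <;> fin_cases j <;>
      simp only [Matrix.of_apply, Fin.zero_eta, Fin.mk_one, Fin.isValue, f00, f01, f10, f11] <;>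
      simp
  have hsplit : (Matrix.of fun i j =>
      deriv (fun s' => LaxL q p x s' i j) s - deriv (fun x' => LaxM q x' s i j) x)
      = (Matrix.of fun i j => deriv (fun s' => LaxL q p x s' i j) s)
        - (Matrix.of fun i j => deriv (fun x' => LaxM q x' s i j) x) := by
    ext i j; simp
  rw [hsplit, dL, dM, LaxL, LaxM]
  ext i j
  fin_cases i <;> fin_cases j <;>
    simp [Matrix.mul_apply, Fin.sum_univ_two] <;> ring_nf <;> simp [Complex.I_sq] <;> ring


set_option maxHeartbeats 1000000 in
/-- The zero-curvature equation `∂_s L − ∂_x M + [L,M] = 0` holds for all `x, s`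
iff `p = q'` and `q` solves Painlevé II: `q'' = 2q³ + sq`. -/
theorem painleveII_zero_curvature (q p : ℝ → ℝ)
    (hq : ContDiff ℝ 2 q) (hp : ContDiff ℝ 1 p) :
    (∀ x s : ℝ,
        (Matrix.of fun i j =>
            deriv (fun s' => LaxL q p x s' i j) s - deriv (fun x' => LaxM q x' s i j) x) +
          (LaxL q p x s * LaxM q x s - LaxM q x s * LaxL q p x s) = 0) ↔
      (∀ s : ℝ, p s = deriv q s ∧ deriv (deriv q) s = 2 * q s ^ 3 + s * q s) := by
  constructor
  · intro h
    have hc : ∀ s : ℝ, deriv p s = s * q s + 2 * q s ^ 3 := by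
      intro s
      have h0 : (!![(4:ℂ)*I*(q s:ℝ)*(((p s:ℝ):ℂ) - ((deriv q s : ℝ):ℂ)),
         4*((0:ℝ):ℂ)*(((deriv q s : ℝ):ℂ) - ((p s:ℝ):ℂ)) + 2*I*(((deriv p s : ℝ):ℂ) - ((s:ℝ):ℂ)*((q s:ℝ):ℂ) - 2*((q s:ℝ):ℂ)^3);
         4*((0:ℝ):ℂ)*(((deriv q s : ℝ):ℂ) - ((p s:ℝ):ℂ)) - 2*I*(((deriv p s : ℝ):ℂ) - ((s:ℝ):ℂ)*((q s:ℝ):ℂ) - 2*((q s:ℝ):ℂ)^3),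
         -((4:ℂ)*I*(q s:ℝ)*(((p s:ℝ):ℂ) - ((deriv q s : ℝ):ℂ)))] : Matrix (Fin 2) (Fin 2) ℂ) = 0 := by
        rw [← laxKey q p hq hp 0 s]; exact h 0 s
      have h01 := congrFun (congrFun h0 0) 1
      simp only [Matrix.of_apply, Matrix.cons_val', Matrix.cons_val_zero, Matrix.cons_val_one,
        Matrix.head_cons, Matrix.empty_val', Matrix.cons_val_fin_one, Matrix.zero_apply,
        Complex.ofReal_zero, mul_zero, zero_mul, zero_add] at h01
      have hI : ((deriv p s : ℝ):ℂ) - ((s:ℝ):ℂ)*((q s:ℝ):ℂ) - 2*((q s:ℝ):ℂ)^3 = 0 := by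
        have h2I : (2:ℂ) * I ≠ 0 := by simp [I_ne_zero]
        rw [mul_assoc, mul_eq_zero, mul_eq_zero] at h01
        rcases h01 with h' | h' | h'
        · exact absurd h' two_ne_zero
        · exact absurd h' I_ne_zero
        · exact h'
      have : ((deriv p s - (s * q s + 2 * q s ^ 3) : ℝ) : ℂ) = 0 := by push_cast; linear_combination hI
      have := Complex.ofReal_eq_zero.mp this
      linarith
    have hpq : ∀ s : ℝ, p s = deriv q s := by
      intro s
      have h1 : (!![(4:ℂ)*I*(q s:ℝ)*(((p s:ℝ):ℂ) - ((deriv q s : ℝ):ℂ)),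
         4*((1:ℝ):ℂ)*(((deriv q s : ℝ):ℂ) - ((p s:ℝ):ℂ)) + 2*I*(((deriv p s : ℝ):ℂ) - ((s:ℝ):ℂ)*((q s:ℝ):ℂ) - 2*((q s:ℝ):ℂ)^3);
         4*((1:ℝ):ℂ)*(((deriv q s : ℝ):ℂ) - ((p s:ℝ):ℂ)) - 2*I*(((deriv p s : ℝ):ℂ) - ((s:ℝ):ℂ)*((q s:ℝ):ℂ) - 2*((q s:ℝ):ℂ)^3),
         -((4:ℂ)*I*(q s:ℝ)*(((p s:ℝ):ℂ) - ((deriv q s : ℝ):ℂ)))] : Matrix (Fin 2) (Fin 2) ℂ) = 0 := by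
        rw [← laxKey q p hq hp 1 s]; exact h 1 s
      have ha := congrFun (congrFun h1 0) 1
      have hb := congrFun (congrFun h1 1) 0
      simp only [Matrix.of_apply, Matrix.cons_val', Matrix.cons_val_zero, Matrix.cons_val_one,
        Matrix.head_cons, Matrix.empty_val', Matrix.cons_val_fin_one, Matrix.zero_apply, Matrix.vecHead, Matrix.vecTail,
        Complex.ofReal_one] at ha hb
      have : ((deriv q s - p s : ℝ) : ℂ) = 0 := by
        push_cast
        linear_combination (ha + hb) / 8
      have := Complex.ofReal_eq_zero.mp this
      linarith
    intro s
    refine ⟨hpq s, ?_⟩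
    have hfun : p = deriv q := funext hpq
    have : deriv (deriv q) s = deriv p s := by rw [← hfun]
    rw [this, hc s]; ring
  · intro h x s
    rw [laxKey q p hq hp x s]
    have h1 : p = deriv q := funext fun t => (h t).1
    have h2 : deriv p s = 2 * q s ^ 3 + s * q s := by rw [h1]; exact (h s).2
    have h3 : p s = deriv q s := (h s).1
    ext i j
    fin_cases i <;> fin_cases j <;> simp [h3, h2] <;> push_cast <;> ring
end

section
/- Let ψ, φ, ψ̄, φ̄ : ℝ → ℂ be twice continuously differentiable with ψ(x)φ̄(x) − ψ̄(x)φ(x) = 1 for all x ∈ ℝ, and define K(x₁,x₂) = (ψ(x₁)φ̄(x₂) − ψ̄(x₁)φ(x₂))/(x₁ − x₂) for x₁ ≠ x₂. Then for every x₁ ∈ ℝ, the limit lim_{x₂→x₁} ( −K(x₁,x₂)·K(x₂,x₁) − 1/(x₁ − x₂)^2 ) exists (is a finite complex number). -/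
open Filter Topology

lemma real_quad (g : ℝ → ℝ) (a : ℝ) (hg : Differentiable ℝ g)
    (hg' : DifferentiableAt ℝ (deriv g) a) (h0 : g a = 0) (h1 : deriv g a = 0) :
    Tendsto (fun x => g x / (x - a) ^ 2) (𝓝[≠] a) (𝓝 (deriv (deriv g) a / 2)) := by
  have hff' : ∀ᶠ x in 𝓝[≠] a, HasDerivAt g (deriv g x) x :=
    Eventually.of_forall fun x => (hg x).hasDerivAt
  have hgg' : ∀ᶠ x in 𝓝[≠] a, HasDerivAt (fun x => (x - a) ^ 2) (2 * (x - a)) x :=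
    Eventually.of_forall fun x => by
      simpa using ((hasDerivAt_id x).sub_const a).fun_pow 2
  have hg'ne : ∀ᶠ x in 𝓝[≠] a, 2 * (x - a) ≠ 0 := by
    filter_upwards [self_mem_nhdsWithin] with x hx
    have : x ≠ a := hx
    simpa [sub_ne_zero] using hx
  have hfa : Tendsto g (𝓝[≠] a) (𝓝 0) :=
    tendsto_nhdsWithin_of_tendsto_nhds (by simpa [h0] using hg.continuous.tendsto a)
  have hga : Tendsto (fun x => (x - a) ^ 2) (𝓝[≠] a) (𝓝 0) := by
    have : Tendsto (fun x : ℝ => (x - a) ^ 2) (𝓝 a) (𝓝 ((a - a) ^ 2)) :=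
      ((continuous_id.sub continuous_const).pow 2).tendsto a
    simp only [sub_self] at this
    simpa using this.mono_left nhdsWithin_le_nhds
  have hslope : Tendsto (slope (deriv g) a) (𝓝[≠] a) (𝓝 (deriv (deriv g) a)) :=
    hasDerivAt_iff_tendsto_slope.mp hg'.hasDerivAt
  have hdiv : Tendsto (fun x => deriv g x / (2 * (x - a))) (𝓝[≠] a)
      (𝓝 (deriv (deriv g) a / 2)) := by
    refine (hslope.div_const 2).congr' ?_
    filter_upwards [self_mem_nhdsWithin] with x hx
    have hxa : x - a ≠ 0 := sub_ne_zero.mpr hx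
    rw [slope_def_field, h1, sub_zero, div_div, mul_comm]
  exact HasDerivAt.lhopital_zero_nhdsNE hff' hgg' hg'ne hfa hga hdiv

lemma clm_quad (f : ℝ → ℂ) (a : ℝ) (hf : ContDiff ℝ 2 f) (h0 : f a = 0)
    (h1 : deriv f a = 0) (L : ℂ →L[ℝ] ℝ) :
    Tendsto (fun x => L (f x) / (x - a) ^ 2) (𝓝[≠] a)
      (𝓝 (deriv (deriv (fun x => L (f x))) a / 2)) := by
  have hfd : Differentiable ℝ f := hf.differentiable (by norm_num)
  have hf2 : ContDiff ℝ (1 + 1 : ℕ∞) f := by exact_mod_cast hf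
  have hdf : ContDiff ℝ 1 (deriv f) := (contDiff_succ_iff_deriv.mp hf2).2.2
  have hud : ∀ x, HasDerivAt (fun x => L (f x)) (L (deriv f x)) x := fun x =>
    L.hasFDerivAt.comp_hasDerivAt x (hfd x).hasDerivAt
  have hderiv : deriv (fun x => L (f x)) = fun x => L (deriv f x) :=
    funext fun x => (hud x).deriv
  refine real_quad _ a (fun x => (hud x).differentiableAt) ?_ (by simp [h0]) ?_
  · rw [hderiv]
    exact (L.differentiable.comp (hdf.differentiable one_ne_zero)).differentiableAt
  · rw [hderiv]
    simp [h1]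

lemma complex_quad (f : ℝ → ℂ) (a : ℝ) (hf : ContDiff ℝ 2 f) (h0 : f a = 0)
    (h1 : deriv f a = 0) :
    ∃ w : ℂ, Tendsto (fun x => f x / ((x : ℂ) - (a : ℂ)) ^ 2) (𝓝[≠] a) (𝓝 w) := by
  obtain hu := clm_quad f a hf h0 h1 Complex.reCLM
  obtain hv := clm_quad f a hf h0 h1 Complex.imCLM
  refine ⟨((deriv (deriv fun x => Complex.reCLM (f x)) a / 2 : ℝ) : ℂ) +
    ((deriv (deriv fun x => Complex.imCLM (f x)) a / 2 : ℝ) : ℂ) * Complex.I, ?_⟩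
  have := ((Complex.continuous_ofReal.tendsto _).comp hu).add
    (((Complex.continuous_ofReal.tendsto _).comp hv).mul_const Complex.I)
  refine this.congr fun x => ?_
  simp only [Function.comp]
  push_cast
  rw [show ((x : ℂ) - a) ^ 2 = (((x - a) ^ 2 : ℝ) : ℂ) by push_cast; ring]
  simp only [Complex.reCLM_apply, Complex.imCLM_apply]
  rw [div_mul_eq_mul_div, ← add_div, Complex.re_add_im]

/-- The second connected correlator `W₂(x₁,x₂) = −K(x₁,x₂)K(x₂,x₁) − 1/(x₁−x₂)²`
has a finite limit at coinciding points. -/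
theorem W2_no_pole_at_diagonal (ψ φ ψb φb : ℝ → ℂ)
    (hψ : ContDiff ℝ 2 ψ) (hφ : ContDiff ℝ 2 φ)
    (hψb : ContDiff ℝ 2 ψb) (hφb : ContDiff ℝ 2 φb)
    (hdet : ∀ x : ℝ, ψ x * φb x - ψb x * φ x = 1) (x₁ : ℝ) :
    ∃ w : ℂ, Tendsto (fun x₂ : ℝ =>
        -((ψ x₁ * φb x₂ - ψb x₁ * φ x₂) / ((x₁ : ℂ) - (x₂ : ℂ)) *
            ((ψ x₂ * φb x₁ - ψb x₂ * φ x₁) / ((x₂ : ℂ) - (x₁ : ℂ)))) -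
          1 / ((x₁ : ℂ) - (x₂ : ℂ)) ^ 2)
      (𝓝[≠] x₁) (𝓝 w) := by
  set f : ℝ → ℂ := fun x =>
    (ψ x₁ * φb x - ψb x₁ * φ x) * (ψ x * φb x₁ - ψb x * φ x₁) - 1 with hfdef
  have hfc : ContDiff ℝ 2 f := by
    exact (((contDiff_const.mul hφb).sub (contDiff_const.mul hφ)).mul
      ((hψ.mul contDiff_const).sub (hψb.mul contDiff_const))).sub contDiff_const
  have hd1 := hdet x₁
  have h0 : f x₁ = 0 := by
    simp only [hfdef]
    linear_combination (ψ x₁ * φb x₁ - ψb x₁ * φ x₁ + 1) * hd1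
  have hψ' : HasDerivAt ψ (deriv ψ x₁) x₁ := ((hψ.differentiable (by norm_num)) x₁).hasDerivAt
  have hφ' : HasDerivAt φ (deriv φ x₁) x₁ := ((hφ.differentiable (by norm_num)) x₁).hasDerivAt
  have hψb' : HasDerivAt ψb (deriv ψb x₁) x₁ := ((hψb.differentiable (by norm_num)) x₁).hasDerivAt
  have hφb' : HasDerivAt φb (deriv φb x₁) x₁ := ((hφb.differentiable (by norm_num)) x₁).hasDerivAt
  have hF : HasDerivAt (fun x => ψ x₁ * φb x - ψb x₁ * φ x)
      (ψ x₁ * deriv φb x₁ - ψb x₁ * deriv φ x₁) x₁ :=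
    (hφb'.const_mul _).sub (hφ'.const_mul _)
  have hG : HasDerivAt (fun x => ψ x * φb x₁ - ψb x * φ x₁)
      (deriv ψ x₁ * φb x₁ - deriv ψb x₁ * φ x₁) x₁ :=
    (hψ'.mul_const _).sub (hψb'.mul_const _)
  have hD0 : HasDerivAt (fun x => ψ x * φb x - ψb x * φ x) 0 x₁ := by
    have heq : (fun x => ψ x * φb x - ψb x * φ x) = fun _ => (1 : ℂ) := funext hdet
    rw [heq]; exact hasDerivAt_const _ _
  have hD1 : HasDerivAt (fun x => ψ x * φb x - ψb x * φ x)
      (deriv ψ x₁ * φb x₁ + ψ x₁ * deriv φb x₁ -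
        (deriv ψb x₁ * φ x₁ + ψb x₁ * deriv φ x₁)) x₁ :=
    (hψ'.mul hφb').sub (hψb'.mul hφ')
  have hz := hD1.unique hD0
  have h1 : deriv f x₁ = 0 := by
    rw [show deriv f x₁ = _ from ((hF.mul hG).sub_const 1).deriv]
    linear_combination (ψ x₁ * φb x₁ - ψb x₁ * φ x₁) * hz
  obtain ⟨w, hw⟩ := complex_quad f x₁ hfc h0 h1
  refine ⟨w, hw.congr' ?_⟩
  filter_upwards [self_mem_nhdsWithin] with x hx
  have hc : (x : ℂ) ≠ (x₁ : ℂ) := by exact_mod_cast (hx : x ≠ x₁)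
  have hne : (x₁ : ℂ) - x ≠ 0 := sub_ne_zero.mpr hc.symm
  have hne' : (x : ℂ) - x₁ ≠ 0 := sub_ne_zero.mpr hc
  simp only [hfdef]
  field_simp
  ring
end
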